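/- Let f : ℝ^d → ℝ be differentiable with L-Lipschitz gradient and convex (L > 0). If x₁ = x₀ - (h/L)·∇f(x₀) for some step size h ∈ (0,2), then ‖∇f(x₁)‖² ≤ ‖∇f(x₀)‖². More precisely, ‖∇f(x₀)‖² - ‖∇f(x₁)‖² ≥ ((2-h)/h)·‖∇f(x₀) - ∇f(x₁)‖². -/

import Mathlib

open RealInnerProductSpace

variable {d : ℕ}

private lemma lineDeriv2 (f : EuclideanSpace ℝ (Fin d) → ℝ) (hdiff : Differentiable ℝ f)
    (x v : EuclideanSpace ℝ (Fin d)) (t : ℝ) :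
    HasDerivAt (fun s : ℝ => f (x + s • v)) ⟪gradient f (x + t • v), v⟫ t := by
  have h1 := (hdiff (x + t • v)).hasGradientAt
  rw [hasGradientAt_iff_hasFDerivAt] at h1
  have h2 : HasDerivAt (fun s : ℝ => x + s • v) v t := by
    simpa using ((hasDerivAt_id t).smul_const v).const_add x
  have h3 := h1.comp_hasDerivAt t h2
  exact h3

private lemma lineConvex (f : EuclideanSpace ℝ (Fin d) → ℝ)
    (hconv : ConvexOn ℝ Set.univ f) (x v : EuclideanSpace ℝ (Fin d)) :
    ConvexOn ℝ Set.univ (fun s : ℝ => f (x + s • v)) := by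
  refine ⟨convex_univ, fun s _ t _ a b ha hb hab => ?_⟩
  have key : x + (a * s + b * t) • v = a • (x + s • v) + b • (x + t • v) := by
    have h1 : a = 1 - b := by linarith
    subst h1; module
  simpa [key] using hconv.2 (Set.mem_univ (x + s • v)) (Set.mem_univ (x + t • v)) ha hb hab

private lemma subgrad (f : EuclideanSpace ℝ (Fin d) → ℝ) (hdiff : Differentiable ℝ f)
    (hconv : ConvexOn ℝ Set.univ f) (x y : EuclideanSpace ℝ (Fin d)) :
    f x + ⟪gradient f x, y - x⟫ ≤ f y := by
  set v := y - x with hv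
  have hc := lineConvex f hconv x v
  have hd : HasDerivAt (fun s : ℝ => f (x + s • v)) ⟪gradient f x, v⟫ 0 := by
    simpa using lineDeriv2 f hdiff x v 0
  have := hc.le_slope_of_hasDerivAt (Set.mem_univ (0:ℝ)) (Set.mem_univ (1:ℝ)) one_pos hd
  rw [slope_def_field] at this
  simp only [zero_smul, add_zero, one_smul] at this
  have hxy : x + v = y := by rw [hv]; abel
  rw [hxy] at this
  have : ⟪gradient f x, v⟫ ≤ f y - f x := by
    simpa [div_one] using this
  linarith

private lemma descent (f : EuclideanSpace ℝ (Fin d) → ℝ) (L : ℝ) (hL : 0 < L)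
    (hdiff : Differentiable ℝ f)
    (hlip : ∀ x y, ‖gradient f x - gradient f y‖ ≤ L * ‖x - y‖)
    (x y : EuclideanSpace ℝ (Fin d)) :
    f y ≤ f x + ⟪gradient f x, y - x⟫ + L / 2 * ‖y - x‖ ^ 2 := by
  set v := y - x with hv
  set φ : ℝ → ℝ := fun t => f (x + t • v) - t * ⟪gradient f x, v⟫ - (L / 2 * ‖v‖ ^ 2) * t ^ 2
    with hφ
  have hder : ∀ t : ℝ, HasDerivAt φ
      (⟪gradient f (x + t • v), v⟫ - ⟪gradient f x, v⟫ - (L / 2 * ‖v‖ ^ 2) * (2 * t)) t := by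
    intro t
    have h1 := lineDeriv2 f hdiff x v t
    have h2 : HasDerivAt (fun t : ℝ => t * ⟪gradient f x, v⟫) ⟪gradient f x, v⟫ t :=
      hasDerivAt_mul_const _
    have h3 : HasDerivAt (fun t : ℝ => (L / 2 * ‖v‖ ^ 2) * t ^ 2)
        ((L / 2 * ‖v‖ ^ 2) * (2 * t)) t := by
      simpa using ((hasDerivAt_pow 2 t).const_mul (L / 2 * ‖v‖ ^ 2))
    exact (h1.sub h2).sub h3
  have hanti : AntitoneOn φ (Set.Icc (0:ℝ) 1) := by
    apply antitoneOn_of_deriv_nonpos (convex_Icc 0 1)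
    · exact Continuous.continuousOn (by rw [hφ]; have hfc := hdiff.continuous; fun_prop)
    · exact fun t _ => ((hder t).differentiableAt).differentiableWithinAt
    · intro t ht
      rw [interior_Icc] at ht
      rw [(hder t).deriv]
      have hb : ⟪gradient f (x + t • v) - gradient f x, v⟫ ≤ L * t * ‖v‖ ^ 2 := by
        calc ⟪gradient f (x + t • v) - gradient f x, v⟫
            ≤ ‖gradient f (x + t • v) - gradient f x‖ * ‖v‖ := real_inner_le_norm _ _
          _ ≤ (L * ‖(x + t • v) - x‖) * ‖v‖ := by
              have := hlip (x + t • v) x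
              nlinarith [norm_nonneg v]
          _ = L * t * ‖v‖ ^ 2 := by
              rw [add_sub_cancel_left, norm_smul, Real.norm_eq_abs, abs_of_pos ht.1]
              ring
      rw [inner_sub_left] at hb
      nlinarith
  have h01 := hanti (Set.mem_Icc.2 ⟨le_refl 0, zero_le_one⟩)
    (Set.mem_Icc.2 ⟨zero_le_one, le_refl 1⟩) zero_le_one
  have hxy : x + (1:ℝ) • v = y := by rw [hv]; simp
  simp only [hφ, zero_smul, add_zero, zero_mul, sub_zero, one_mul, one_pow, mul_one,
    zero_pow, hxy] at h01
  simp only [ne_eq, OfNat.ofNat_ne_zero, not_false_eq_true, zero_pow, mul_zero, sub_zero] at h01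
  linarith

private lemma onesided (f : EuclideanSpace ℝ (Fin d) → ℝ) (L : ℝ) (hL : 0 < L)
    (hdiff : Differentiable ℝ f) (hconv : ConvexOn ℝ Set.univ f)
    (hlip : ∀ x y, ‖gradient f x - gradient f y‖ ≤ L * ‖x - y‖)
    (x y : EuclideanSpace ℝ (Fin d)) :
    1 / (2 * L) * ‖gradient f y - gradient f x‖ ^ 2 ≤ f y - f x - ⟪gradient f x, y - x⟫ := by
  set g₀ := gradient f x with hg₀
  set F : EuclideanSpace ℝ (Fin d) → ℝ := fun z => f z - ⟪g₀, z⟫ with hF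
  have hinner : Differentiable ℝ (fun z : EuclideanSpace ℝ (Fin d) => ⟪g₀, z⟫) :=
    (innerSL ℝ g₀).differentiable
  have hFdiff : Differentiable ℝ F := hdiff.sub hinner
  have hFgrad : ∀ z, gradient F z = gradient f z - g₀ := by
    intro z
    have h1 : HasGradientAt F (gradient f z - g₀) z := by
      rw [hasGradientAt_iff_hasFDerivAt]
      have h2 := (hdiff z).hasGradientAt
      rw [hasGradientAt_iff_hasFDerivAt] at h2
      have h3 : HasFDerivAt (fun z : EuclideanSpace ℝ (Fin d) => ⟪g₀, z⟫)
          (innerSL ℝ g₀) z := (innerSL ℝ g₀).hasFDerivAt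
      have h4 := h2.sub h3
      convert h4 using 1
      case e'_8 => rfl
      case e'_9 => rfl
      case e'_11 => rfl
      ext w
      simp [InnerProductSpace.toDual_apply_apply, inner_sub_left]
    exact h1.gradient
  have hFconv : ConvexOn ℝ Set.univ F := by
    apply hconv.sub
    refine ⟨convex_univ, fun p _ q _ a b ha hb hab => ?_⟩
    rw [inner_add_right, real_inner_smul_right, real_inner_smul_right]
    simp [smul_eq_mul]
  have hFlip : ∀ z w, ‖gradient F z - gradient F w‖ ≤ L * ‖z - w‖ := by
    intro z w
    rw [hFgrad, hFgrad]
    simpa using hlip z w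
  have hFgradx : gradient F x = 0 := by rw [hFgrad]; simp [hg₀]
  set z := y - (1 / L) • gradient F y with hz
  have hmin : F x ≤ F z := by
    have := subgrad F hFdiff hFconv x z
    rw [hFgradx] at this
    simpa using this
  have hdesc := descent F L hL hFdiff hFlip y z
  have hzy : z - y = -((1 / L) • gradient F y) := by rw [hz]; abel
  rw [hzy] at hdesc
  have e1 : ⟪gradient F y, -((1 / L) • gradient F y)⟫ = -(1 / L) * ‖gradient F y‖ ^ 2 := by
    rw [inner_neg_right, real_inner_smul_right, real_inner_self_eq_norm_sq]
    ring
  have e2 : ‖-((1 / L) • gradient F y)‖ ^ 2 = (1 / L) ^ 2 * ‖gradient F y‖ ^ 2 := by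
    rw [norm_neg, norm_smul, Real.norm_eq_abs, abs_of_pos (by positivity : (0:ℝ) < 1 / L)]
    ring
  rw [e1, e2] at hdesc
  have key : F x ≤ F y - 1 / (2 * L) * ‖gradient F y‖ ^ 2 := by
    have hL' : L ≠ 0 := ne_of_gt hL
    calc F x ≤ F z := hmin
      _ ≤ F y + -(1 / L) * ‖gradient F y‖ ^ 2 + L / 2 * ((1 / L) ^ 2 * ‖gradient F y‖ ^ 2) :=
          hdesc
      _ = F y - 1 / (2 * L) * ‖gradient F y‖ ^ 2 := by field_simp; ring
  rw [hFgrad] at key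
  simp only [hF] at key
  have hsub : ⟪g₀, y⟫ - ⟪g₀, x⟫ = ⟪g₀, y - x⟫ := (inner_sub_right _ _ _).symm
  rw [← hsub]
  linarith [key]

set_option maxHeartbeats 1000000 in
theorem stmt_0 {d : ℕ} (f : EuclideanSpace ℝ (Fin d) → ℝ) (L : ℝ) (hL : 0 < L)
    (hdiff : Differentiable ℝ f)
    (hconv : ConvexOn ℝ Set.univ f)
    (hlip : ∀ x y, ‖gradient f x - gradient f y‖ ≤ L * ‖x - y‖)
    (h : ℝ) (hh : h ∈ Set.Ioo (0:ℝ) 2)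
    (x₀ x₁ : EuclideanSpace ℝ (Fin d))
    (hstep : x₁ = x₀ - (h / L) • gradient f x₀) :
    ‖gradient f x₁‖ ^ 2 ≤ ‖gradient f x₀‖ ^ 2 ∧
    ‖gradient f x₀‖ ^ 2 - ‖gradient f x₁‖ ^ 2 ≥
      ((2 - h) / h) * ‖gradient f x₀ - gradient f x₁‖ ^ 2 := by
  obtain ⟨hh0, hh2⟩ := hh
  set g0 := gradient f x₀ with hg0
  set g1 := gradient f x₁ with hg1
  have h1 := onesided f L hL hdiff hconv hlip x₀ x₁
  have h2 := onesided f L hL hdiff hconv hlip x₁ x₀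
  rw [← hg0, ← hg1] at h1 h2
  have hn : ‖g1 - g0‖ = ‖g0 - g1‖ := norm_sub_rev _ _
  rw [hn] at h1
  have hco : 1 / L * ‖g0 - g1‖ ^ 2 ≤ ⟪g0 - g1, x₀ - x₁⟫ := by
    have e : ⟪g0, x₁ - x₀⟫ + ⟪g1, x₀ - x₁⟫ = -⟪g0 - g1, x₀ - x₁⟫ := by
      rw [inner_sub_left]
      have hrev : (x₁ - x₀ : EuclideanSpace ℝ (Fin d)) = -(x₀ - x₁) := by abel
      rw [hrev, inner_neg_right]
      ring
    have eL : 1 / L = 2 * (1 / (2 * L)) := by field_simp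
    rw [eL]
    nlinarith [h1, h2, e.le, e.ge]
  have hdiffx : x₀ - x₁ = (h / L) • g0 := by rw [hstep]; abel
  rw [hdiffx, real_inner_smul_right] at hco
  have key : ‖g0 - g1‖ ^ 2 ≤ h * ⟪g0 - g1, g0⟫ := by
    have hLpos : (0:ℝ) < L := hL
    have := mul_le_mul_of_nonneg_left hco hLpos.le
    have eL2 : L * (1 / L * ‖g0 - g1‖ ^ 2) = ‖g0 - g1‖ ^ 2 := by field_simp
    have eL3 : L * (h / L * ⟪g0 - g1, g0⟫) = h * ⟪g0 - g1, g0⟫ := by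
      field_simp
    linarith [eL2.le, eL2.ge, eL3.le, eL3.ge]
  have hexp : ‖g0 - g1‖ ^ 2 = ‖g0‖ ^ 2 - 2 * ⟪g0, g1⟫ + ‖g1‖ ^ 2 := norm_sub_sq_real g0 g1
  have hip2 : ⟪g0 - g1, g0⟫ = ‖g0‖ ^ 2 - ⟪g0, g1⟫ := by
    rw [inner_sub_left, real_inner_self_eq_norm_sq, real_inner_comm]
  have e3 : ‖g0‖ ^ 2 - ‖g1‖ ^ 2 = 2 * ⟪g0 - g1, g0⟫ - ‖g0 - g1‖ ^ 2 := by linarith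
  have hinn : (0:ℝ) ≤ ⟪g0 - g1, g0⟫ := by nlinarith [sq_nonneg ‖g0 - g1‖]
  have h2le : h * ⟪g0 - g1, g0⟫ ≤ 2 * ⟪g0 - g1, g0⟫ :=
    mul_le_mul_of_nonneg_right hh2.le hinn
  constructor
  · linarith [key, h2le, e3, sq_nonneg ‖g0 - g1‖]
  · rw [ge_iff_le, div_mul_eq_mul_div, div_le_iff₀ hh0, e3]
    have expand : (2 * ⟪g0 - g1, g0⟫ - ‖g0 - g1‖ ^ 2) * h
        = 2 * (h * ⟪g0 - g1, g0⟫) - h * ‖g0 - g1‖ ^ 2 := by ring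
    have expand2 : (2 - h) * ‖g0 - g1‖ ^ 2 = 2 * ‖g0 - g1‖ ^ 2 - h * ‖g0 - g1‖ ^ 2 := by ring
    rw [expand, expand2]
    linarith [key]
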